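/- Let $a, b, c$ be positive integers with $ab \mid c$, $\gcd(a, b) = 1$, and let $\alpha$ be an integer with $\gcd(\alpha, c) = 1$ and $n$ any integer. Write $a' = \prod_{p : v_p(a) = v_p(c)} p^{v_p(c)}$ and $a'' = a/a'$. If $a'' > 1$, then $S(an, b\alpha; c) = 0$. If $a'' = 1$ (i.e. for each prime $p \mid a$, $v_p(a) = v_p(c)$) and additionally $\gcd(a, c/a) = 1$, then $S(an, b\alpha; c) = S(0, 1; a) \cdot S(n, b\alpha \bar{a}; c/a)$, where $\bar{a}$ denotes the inverse of $a$ modulo $c/a$. -/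

import Mathlib

open Finset

/-- `e(x) = e^{2πix}`. -/
noncomputable def efn (x : ℝ) : ℂ := Complex.exp (2 * Real.pi * Complex.I * x)

/-- Classical Kloosterman sum `S(a,b;c) = ∑_{x mod c, (x,c)=1} e((ax + b x̄)/c)`. -/
noncomputable def Kl (a b : ℤ) (c : ℕ) : ℂ :=
  ∑ x ∈ Finset.range c, if Nat.gcd x c = 1 then
    efn (((a * x + b * (((x : ZMod c)⁻¹).val : ℤ) : ℤ) : ℝ) / c) else 0

lemma efn_add (x y : ℝ) : efn (x + y) = efn x * efn y := by
  simp [efn, ← Complex.exp_add]; ring_nf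

lemma efn_int (k : ℤ) : efn k = 1 := by
  simp only [efn]
  rw [show (2 : ℂ) * Real.pi * Complex.I * (k : ℝ) = (k : ℤ) * (2 * Real.pi * Complex.I) by
    push_cast; ring]
  exact Complex.exp_int_mul_two_pi_mul_I k

noncomputable def psi (c : ℕ) (z : ZMod c) : ℂ := efn ((z.val : ℝ) / c)

lemma psi_intCast (c : ℕ) [NeZero c] (m : ℤ) : psi c (m : ZMod c) = efn ((m : ℝ) / c) := by
  have hc0 : (c:ℝ) ≠ 0 := Nat.cast_ne_zero.2 (NeZero.ne c)
  have h1 : (((m : ZMod c).val : ℤ) : ℝ) = ((m % c : ℤ) : ℝ) := by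
    exact_mod_cast congrArg (fun z : ℤ => (z : ℝ)) (ZMod.val_intCast m)
  have h2 : (m : ℝ) = c * ((m / c : ℤ) : ℝ) + ((m % c : ℤ) : ℝ) := by
    exact_mod_cast congrArg (fun z : ℤ => (z : ℝ)) (Int.mul_ediv_add_emod m c).symm
  have key : (m : ℝ) / c = (((m : ZMod c).val : ℕ) : ℝ) / c + ((m / c : ℤ) : ℝ) := by
    rw [show ((((m : ZMod c).val : ℕ)) : ℝ) = ((m % c : ℤ) : ℝ) by exact_mod_cast h1]
    field_simp [h2]
    linarith
  rw [key, efn_add, efn_int, mul_one, psi]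

lemma psi_zero (c : ℕ) : psi c 0 = 1 := by
  have := efn_int 0
  simp only [Int.cast_zero] at this
  simp [psi, ZMod.val_zero, this]

lemma zmod_eq_intCast_val (c : ℕ) [NeZero c] (z : ZMod c) : ((z.val : ℤ) : ZMod c) = z := by
  push_cast
  exact ZMod.natCast_rightInverse z

lemma zmod_natCast_val (c : ℕ) [NeZero c] (z : ZMod c) : ((z.val : ℕ) : ZMod c) = z :=
  ZMod.natCast_rightInverse z

lemma psi_add (c : ℕ) [NeZero c] (y z : ZMod c) : psi c (y + z) = psi c y * psi c z := by
  have hy := zmod_eq_intCast_val c y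
  have hz := zmod_eq_intCast_val c z
  have h : y + z = (((y.val : ℤ) + (z.val : ℤ) : ℤ) : ZMod c) := by
    rw [Int.cast_add, hy, hz]
  rw [h, psi_intCast]
  have h2 : (((y.val : ℤ) + (z.val : ℤ) : ℤ) : ℝ) / c = (y.val : ℝ)/c + (z.val : ℝ)/c := by
    push_cast; ring
  rw [h2, efn_add, psi, psi]

lemma psi_nsmul (c : ℕ) [NeZero c] (t : ℕ) (z : ZMod c) :
    psi c ((t : ZMod c) * z) = psi c z ^ t := by
  induction t with
  | zero => simp [psi_zero]
  | succ k ih =>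
    have h : ((k+1 : ℕ) : ZMod c) * z = (k : ZMod c) * z + z := by push_cast; ring
    rw [h, psi_add, ih, pow_succ]

lemma psi_eq_one_iff (c : ℕ) [NeZero c] (z : ZMod c) : psi c z = 1 ↔ z = 0 := by
  constructor
  · intro h
    have hc : 0 < c := Nat.pos_of_ne_zero (NeZero.ne c)
    rw [psi, efn, Complex.exp_eq_one_iff] at h
    obtain ⟨k, hk⟩ := h
    have hI : (2 : ℂ) * Real.pi * Complex.I ≠ 0 := by
      simp [Real.pi_ne_zero, Complex.I_ne_zero]
    have : ((z.val : ℝ) / c : ℝ) = ((k : ℝ) : ℝ) := by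
      have := hk
      rw [show (k : ℂ) * (2 * ↑Real.pi * Complex.I) = (2 * ↑Real.pi * Complex.I) * (k:ℝ) by
        push_cast; ring] at this
      have := mul_left_cancel₀ hI this
      exact_mod_cast this
    have hnn : (0:ℝ) ≤ (z.val : ℝ) / c := by positivity
    have hlt : (z.val : ℝ) / c < 1 := by
      rw [div_lt_one (by exact_mod_cast hc)]
      exact_mod_cast ZMod.val_lt z
    have hki : k = 0 := by
      have h0 : (0:ℝ) ≤ (k:ℝ) := this ▸ hnn
      have h1 : (k:ℝ) < 1 := this ▸ hlt
      have h0' : (0:ℤ) ≤ k := by exact_mod_cast h0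
      have h1' : k < 1 := by exact_mod_cast h1
      omega
    have hv : (z.val : ℝ) = 0 := by
      rw [hki] at this
      simp only [Int.cast_zero] at this
      have hc0 : (c:ℝ) ≠ 0 := Nat.cast_ne_zero.2 (NeZero.ne c)
      exact (div_eq_zero_iff.mp this).resolve_right hc0
    have : z.val = 0 := by exact_mod_cast hv
    exact (ZMod.val_eq_zero z).mp this
  · intro h; rw [h, psi_zero]

noncomputable def KlU (M N : ℤ) (c : ℕ) [NeZero c] : ℂ :=
  ∑ u : (ZMod c)ˣ, psi c ((M : ZMod c) * u + (N : ZMod c) * ↑u⁻¹)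

lemma Kl_term (M N : ℤ) (c : ℕ) [NeZero c] (u : (ZMod c)ˣ) :
    psi c ((M : ZMod c) * u + (N : ZMod c) * ↑u⁻¹)
      = efn (((M * (u : ZMod c).val + N * (((u : ZMod c))⁻¹).val : ℤ) : ℝ) / c) := by
  rw [← psi_intCast]
  congr 1
  push_cast
  rw [zmod_natCast_val, zmod_natCast_val, ZMod.inv_coe_unit]

lemma Kl_eq_KlU (M N : ℤ) (c : ℕ) [NeZero c] : Kl M N c = KlU M N c := by
  rw [Kl, KlU]
  rw [← Finset.sum_filter]
  symm
  apply Finset.sum_bij (i := fun (u : (ZMod c)ˣ) _ => (u : ZMod c).val)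
  · intro u _
    simp only [Finset.mem_filter, Finset.mem_range]
    exact ⟨ZMod.val_lt _, ZMod.val_coe_unit_coprime u⟩
  · intro u _ v _ h
    have : (u : ZMod c) = v := by
      rw [← zmod_eq_intCast_val c (u : ZMod c), ← zmod_eq_intCast_val c (v : ZMod c), h]
    exact Units.ext this
  · intro x hx
    simp only [Finset.mem_filter, Finset.mem_range] at hx
    have hu : IsUnit ((x : ℕ) : ZMod c) := (ZMod.isUnit_iff_coprime x c).2 hx.2
    refine ⟨hu.unit, Finset.mem_univ _, ?_⟩
    rw [IsUnit.unit_spec]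
    exact ZMod.val_cast_of_lt hx.1
  · intro u _
    rw [Kl_term, zmod_natCast_val c (u : ZMod c)]

lemma psi_split (q r : ℕ) [NeZero q] [NeZero r] (g h : ℤ) (hgh : g * r + h * q = 1) (m : ℤ) :
    psi (q * r) ((m : ZMod (q * r)))
      = psi q ((g * m : ℤ) : ZMod q) * psi r ((h * m : ℤ) : ZMod r) := by
  haveI : NeZero (q * r) := ⟨mul_ne_zero (NeZero.ne q) (NeZero.ne r)⟩
  rw [psi_intCast, psi_intCast, psi_intCast, ← efn_add]
  congr 1
  have hq : (q:ℝ) ≠ 0 := Nat.cast_ne_zero.2 (NeZero.ne q)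
  have hr : (r:ℝ) ≠ 0 := Nat.cast_ne_zero.2 (NeZero.ne r)
  have hgh' : (g:ℝ) * r + (h:ℝ) * q = 1 := by exact_mod_cast congrArg (fun z : ℤ => (z:ℝ)) hgh
  push_cast
  rw [div_add_div _ _ hq hr, show ((q:ℝ) * r) = ((q*r : ℕ) : ℝ) by push_cast; ring]
  congr 1
  linear_combination (-(m : ℝ)) * hgh'

lemma KlU_mul (M N : ℤ) (q r : ℕ) [NeZero q] [NeZero r] (hqr : Nat.Coprime q r)
    (g h : ℤ) (hgh : g * r + h * q = 1) :
    KlU M N (q * r) = KlU (g * M) (g * N) q * KlU (h * M) (h * N) r := by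
  haveI : NeZero (q * r) := ⟨mul_ne_zero (NeZero.ne q) (NeZero.ne r)⟩
  set φq : ZMod (q*r) →+* ZMod q := ZMod.castHom (Dvd.intro r rfl) (ZMod q) with hφq
  set φr : ZMod (q*r) →+* ZMod r := ZMod.castHom (Dvd.intro_left q rfl) (ZMod r) with hφr
  set e : (ZMod (q*r))ˣ ≃* (ZMod q)ˣ × (ZMod r)ˣ :=
    (Units.mapEquiv (ZMod.chineseRemainder hqr).toMulEquiv).trans MulEquiv.prodUnits with he
  have hcoe1 : ∀ u : (ZMod (q*r))ˣ, ((e u).1 : ZMod q) = φq ↑u := by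
    intro u
    have h1 : (RingHom.fst (ZMod q) (ZMod r)).comp (ZMod.chineseRemainder hqr).toRingHom = φq :=
      RingHom.ext_zmod _ _
    have h2 := congrArg (fun f : ZMod (q*r) →+* ZMod q => f (↑u : ZMod (q*r))) h1
    simpa [he, MulEquiv.prodUnits] using h2
  have hcoe2 : ∀ u : (ZMod (q*r))ˣ, ((e u).2 : ZMod r) = φr ↑u := by
    intro u
    have h1 : (RingHom.snd (ZMod q) (ZMod r)).comp (ZMod.chineseRemainder hqr).toRingHom = φr :=
      RingHom.ext_zmod _ _
    have h2 := congrArg (fun f : ZMod (q*r) →+* ZMod r => f (↑u : ZMod (q*r))) h1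
    simpa [he, MulEquiv.prodUnits] using h2
  rw [KlU]
  rw [Fintype.sum_equiv e.toEquiv _
    (fun p : (ZMod q)ˣ × (ZMod r)ˣ =>
      psi q (((g*M : ℤ) : ZMod q) * p.1 + ((g*N : ℤ) : ZMod q) * ↑p.1⁻¹) *
      psi r (((h*M : ℤ) : ZMod r) * p.2 + ((h*N : ℤ) : ZMod r) * ↑p.2⁻¹)) ?_]
  · rw [Fintype.sum_prod_type]
    rw [KlU, KlU, Finset.sum_mul_sum]
    try push_cast
    try rfl
  · intro u
    obtain ⟨m, hmc⟩ : ∃ m : ℤ,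
        ((m : ℤ) : ZMod (q*r)) = (M : ZMod (q*r)) * u + (N : ZMod (q*r)) * ↑u⁻¹ :=
      ⟨M * ((u : ZMod (q*r)).val : ℤ) + N * (((u⁻¹ : (ZMod (q*r))ˣ) : ZMod (q*r)).val : ℤ),
        by push_cast; rw [zmod_natCast_val, zmod_natCast_val]⟩
    have hinv1 : (↑((e u).1)⁻¹ : ZMod q) = φq ↑u⁻¹ := by
      rw [show ((e u).1)⁻¹ = (e u⁻¹).1 by rw [map_inv]; rfl]
      exact hcoe1 u⁻¹
    have hinv2 : (↑((e u).2)⁻¹ : ZMod r) = φr ↑u⁻¹ := by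
      rw [show ((e u).2)⁻¹ = (e u⁻¹).2 by rw [map_inv]; rfl]
      exact hcoe2 u⁻¹
    rw [← hmc, psi_split q r g h hgh m]
    congr 2
    · have hmq : ((m : ℤ) : ZMod q) = (M : ZMod q) * ↑(e u).1 + (N : ZMod q) * ↑((e u).1)⁻¹ := by
        rw [← map_intCast φq m, hmc, map_add, map_mul, map_mul, map_intCast, map_intCast,
          ← hcoe1 u, ← hinv1]
      push_cast [hmq]
      rw [show e.toEquiv u = e u from rfl]
      ring
    · have hmr : ((m : ℤ) : ZMod r) = (M : ZMod r) * ↑(e u).2 + (N : ZMod r) * ↑((e u).2)⁻¹ := by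
        rw [← map_intCast φr m, hmc, map_add, map_mul, map_mul, map_intCast, map_intCast,
          ← hcoe2 u, ← hinv2]
      push_cast [hmr]
      rw [show e.toEquiv u = e u from rfl]
      ring

lemma KlU_congr (M M' N N' : ℤ) (c : ℕ) [NeZero c] (hM : (M : ZMod c) = (M' : ZMod c))
    (hN : (N : ZMod c) = (N' : ZMod c)) : KlU M N c = KlU M' N' c := by
  unfold KlU; rw [hM, hN]

lemma KlU_zero_unit (N : ℤ) (c : ℕ) [NeZero c] (hN : IsUnit ((N : ℤ) : ZMod c)) :
    KlU 0 N c = KlU 0 1 c := by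
  unfold KlU
  simp only [Int.cast_zero, Int.cast_one, zero_mul, zero_add, one_mul]
  symm
  apply Fintype.sum_equiv (Equiv.mulLeft hN.unit)
  intro u
  have key : (N : ZMod c) * ↑(hN.unit * u)⁻¹ = ↑u⁻¹ := by
    rw [mul_inv_rev, Units.val_mul]
    calc (N : ZMod c) * (↑u⁻¹ * ↑hN.unit⁻¹)
        = (↑u⁻¹ : ZMod c) * ((N : ZMod c) * ↑hN.unit⁻¹) := by ring
      _ = ↑u⁻¹ := by
          rw [hN.mul_val_inv, mul_one]
  rw [show Equiv.mulLeft hN.unit u = hN.unit * u from rfl, key]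

lemma KlU_vanish (p : ℕ) (hp : p.Prime) (β : ℕ) (hβ : 2 ≤ β) [NeZero (p ^ β)] (M N : ℤ)
    (hM : (p : ℤ) ∣ M) (hN : IsUnit ((N : ℤ) : ZMod (p ^ β))) :
    KlU M N (p ^ β) = 0 := by
  haveI : Fact p.Prime := ⟨hp⟩
  set q := p ^ β with hqdef
  set x : ZMod q := (p : ZMod q) ^ (β - 1) with hxdef
  have hpq : ((p : ZMod q)) ^ β = 0 := by
    have h1 : ((p : ZMod q)) ^ β = ((p ^ β : ℕ) : ZMod q) := by push_cast; ring
    rw [h1, hqdef, ZMod.natCast_self]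
  have hx2 : x * x = 0 := by
    rw [hxdef, ← pow_add]
    have h1 : ((p : ZMod q) ^ (β - 1 + (β - 1))) = ((p : ZMod q)) ^ β * ((p : ZMod q)) ^ (β - 2) := by
      rw [← pow_add]; congr 1; omega
    rw [h1, hpq, zero_mul]
  have hpx : (p : ZMod q) * x = 0 := by
    rw [hxdef, ← pow_succ']
    rw [show β - 1 + 1 = β by omega, hpq]
  set ε : (ZMod q)ˣ := ⟨1 + x, 1 - x, by linear_combination -hx2, by linear_combination -hx2⟩
    with hε
  have hεval : (↑ε : ZMod q) = 1 + x := rfl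
  have hεinv : (↑ε⁻¹ : ZMod q) = 1 - x := rfl
  have hpow : ∀ t : ℕ, (↑(ε ^ t) : ZMod q) = 1 + (t : ZMod q) * x := by
    intro t
    induction t with
    | zero => simp
    | succ k ih =>
      rw [pow_succ, Units.val_mul, ih, hεval]
      push_cast
      linear_combination (k : ZMod q) * hx2
  have hpowinv : ∀ t : ℕ, (↑(ε ^ t)⁻¹ : ZMod q) = 1 - (t : ZMod q) * x := by
    intro t
    induction t with
    | zero => simp
    | succ k ih =>
      rw [pow_succ, mul_inv_rev, Units.val_mul, ih, hεinv]
      push_cast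
      linear_combination (k : ZMod q) * hx2
  have hw : ∀ u : (ZMod q)ˣ, x * ((M : ZMod q) * ↑u - (N : ZMod q) * ↑u⁻¹) ≠ 0 := by
    intro u hcon
    set w : ZMod q := (M : ZMod q) * ↑u - (N : ZMod q) * ↑u⁻¹ with hwdef
    have hdvd : p ∣ w.val := by
      have h1 : x * w = ((p ^ (β - 1) * w.val : ℕ) : ZMod q) := by
        push_cast
        rw [ZMod.natCast_rightInverse w, hxdef]
      rw [h1, ZMod.natCast_eq_zero_iff] at hcon
      have hcon' : p ^ (β - 1) * p ∣ p ^ (β - 1) * w.val := by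
        rw [← pow_succ, show β - 1 + 1 = β by omega]
        exact hcon
      exact (Nat.mul_dvd_mul_iff_left (pow_pos hp.pos _)).mp hcon'
    have hpdvdq : p ∣ q := by rw [hqdef]; exact dvd_pow_self p (by omega)
    set π : ZMod q →+* ZMod p := ZMod.castHom hpdvdq (ZMod p) with hπ
    have hπw : π w = 0 := by
      have h2 : π w = ((w.val : ℕ) : ZMod p) := by
        conv_lhs => rw [← ZMod.natCast_rightInverse w]
        rw [map_natCast]
      rw [h2, ZMod.natCast_eq_zero_iff]
      exact hdvd
    have hMu : π ((M : ZMod q) * ↑u) = 0 := by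
      rw [map_mul, map_intCast, (ZMod.intCast_zmod_eq_zero_iff_dvd M p).mpr hM, zero_mul]
    have hNu : IsUnit (π ((N : ZMod q) * ↑u⁻¹)) := by
      rw [map_mul]
      exact (hN.map π).mul ((u⁻¹).isUnit.map π)
    rw [hwdef, map_sub, hMu, zero_sub, neg_eq_zero] at hπw
    exact hNu.ne_zero hπw
  have hgeom : ∀ u : (ZMod q)ˣ,
      ∑ t ∈ range p,
        psi q ((M : ZMod q) * ↑(ε ^ t * u) + (N : ZMod q) * ↑(ε ^ t * u)⁻¹) = 0 := by
    intro u
    set A : ZMod q := (M : ZMod q) * ↑u + (N : ZMod q) * ↑u⁻¹ with hA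
    set B : ZMod q := x * ((M : ZMod q) * ↑u - (N : ZMod q) * ↑u⁻¹) with hB
    have hterm : ∀ t ∈ range p,
        psi q ((M : ZMod q) * ↑(ε ^ t * u) + (N : ZMod q) * ↑(ε ^ t * u)⁻¹)
          = psi q A * (psi q B) ^ t := by
      intro t _
      rw [Units.val_mul, mul_inv_rev, Units.val_mul, hpow t, hpowinv t]
      have h3 : (M : ZMod q) * ((1 + (t : ZMod q) * x) * ↑u)
          + (N : ZMod q) * (↑u⁻¹ * (1 - (t : ZMod q) * x)) = A + (t : ZMod q) * B := by
        rw [hA, hB]; ring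
      rw [h3, psi_add, psi_nsmul]
    rw [Finset.sum_congr rfl hterm, ← Finset.mul_sum]
    have hζp : (psi q B) ^ p = 1 := by
      rw [← psi_nsmul, hB, ← mul_assoc, hpx, zero_mul, psi_zero]
    have hζ1 : psi q B ≠ 1 := fun hcon => hw u ((psi_eq_one_iff q B).mp hcon)
    rw [geom_sum_eq hζ1, hζp]
    simp
  have hS : ∀ t : ℕ, KlU M N q = ∑ u : (ZMod q)ˣ,
      psi q ((M : ZMod q) * ↑(ε ^ t * u) + (N : ZMod q) * ↑(ε ^ t * u)⁻¹) := by
    intro t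
    unfold KlU
    apply Fintype.sum_equiv (Equiv.mulLeft (ε ^ t)⁻¹)
    intro v
    rw [show Equiv.mulLeft (ε ^ t)⁻¹ v = (ε ^ t)⁻¹ * v from rfl, mul_inv_cancel_left]
  have hc : (p : ℂ) * KlU M N q = 0 := by
    calc (p : ℂ) * KlU M N q = ∑ _t ∈ range p, KlU M N q := by
          rw [Finset.sum_const, card_range, nsmul_eq_mul]
      _ = ∑ t ∈ range p, ∑ u : (ZMod q)ˣ,
            psi q ((M : ZMod q) * ↑(ε ^ t * u) + (N : ZMod q) * ↑(ε ^ t * u)⁻¹) :=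
          Finset.sum_congr rfl (fun t _ => hS t)
      _ = ∑ u : (ZMod q)ˣ, ∑ t ∈ range p,
            psi q ((M : ZMod q) * ↑(ε ^ t * u) + (N : ZMod q) * ↑(ε ^ t * u)⁻¹) :=
          Finset.sum_comm
      _ = 0 := by
          rw [Finset.sum_congr rfl (fun u _ => hgeom u), Finset.sum_const, smul_zero]
  have hp0 : (p : ℂ) ≠ 0 := Nat.cast_ne_zero.2 hp.pos.ne'
  exact (mul_eq_zero.mp hc).resolve_left hp0

lemma exists_bad_prime (a c : ℕ) (ha : 0 < a) (hc : 0 < c) (hac : a ∣ c)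
    (a' a'' : ℕ)
    (ha' : a' = ∏ p ∈ a.primeFactors.filter
        (fun p => a.factorization p = c.factorization p), p ^ c.factorization p)
    (ha'' : a'' = a / a') (h1 : 1 < a'') :
    ∃ p : ℕ, p.Prime ∧ p ∣ a ∧ a.factorization p < c.factorization p := by
  by_contra hno
  push_neg at hno
  have hall : ∀ p : ℕ, p ∈ a.primeFactors → a.factorization p = c.factorization p := by
    intro p hp
    have hprime := Nat.prime_of_mem_primeFactors hp
    have hdvd := Nat.dvd_of_mem_primeFactors hp
    have hle : a.factorization p ≤ c.factorization p :=
      (Nat.factorization_le_iff_dvd ha.ne' hc.ne').2 hac p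
    exact le_antisymm hle (hno p hprime hdvd)
  have hfilter : a.primeFactors.filter
      (fun p => a.factorization p = c.factorization p) = a.primeFactors :=
    Finset.filter_true_of_mem hall
  have hprod : a' = a := by
    rw [ha', hfilter]
    rw [Finset.prod_congr rfl (fun p hp => by rw [← hall p hp])]
    rw [← Nat.support_factorization]
    exact Nat.factorization_prod_pow_eq_self ha.ne'
  rw [hprod, Nat.div_self ha] at ha''
  omega

lemma isUnit_intCast_of_coprime (m : ℕ) (z : ℤ) (h : IsCoprime z (m : ℤ)) :
    IsUnit ((z : ℤ) : ZMod m) := by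
  obtain ⟨u, v, huv⟩ := h
  apply IsUnit.of_mul_eq_one ((u : ℤ) : ZMod m)
  have := congrArg (fun t : ℤ => ((t : ℤ) : ZMod m)) huv
  simpa [mul_comm] using this

lemma bezout_of_coprime (q r : ℕ) (h : Nat.Coprime q r) :
    ∃ g h' : ℤ, g * (r : ℤ) + h' * (q : ℤ) = 1 := by
  have h1 : IsCoprime (q : ℤ) (r : ℤ) := by
    rw [Int.isCoprime_iff_gcd_eq_one, Int.gcd_natCast_natCast]
    exact h
  obtain ⟨u, v, huv⟩ := h1
  exact ⟨v, u, by linarith⟩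

lemma unit_of_bezout (q r : ℕ) [NeZero q] (g h : ℤ) (hgh : g * (r:ℤ) + h * (q:ℤ) = 1) :
    IsUnit ((g : ℤ) : ZMod q) := by
  apply IsUnit.of_mul_eq_one ((r : ℤ) : ZMod q)
  have h2 := congrArg (fun t : ℤ => ((t : ℤ) : ZMod q)) hgh
  push_cast at h2
  simpa [ZMod.natCast_self] using h2

/-- Evaluation of `S(an, bα; c)` with `ab ∣ c`, `(a,b)=1`, `(α,c)=1`: vanishing when
`a'' > 1`, and factorization `S(an,bα;c) = S(0,1;a)·S(n, bα·ā; c/a)` when `a'' = 1`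
and `(a, c/a) = 1`. -/
theorem stmt4 (a b c : ℕ) (ha : 0 < a) (hb : 0 < b) (hc : 0 < c)
    (hab : a * b ∣ c) (hcop : Nat.Coprime a b)
    (n α : ℤ) (hα : Int.gcd α c = 1)
    (a' a'' : ℕ)
    (ha' : a' = ∏ p ∈ a.primeFactors.filter
        (fun p => a.factorization p = c.factorization p), p ^ c.factorization p)
    (ha'' : a'' = a / a') :
    (1 < a'' → Kl ((a : ℤ) * n) ((b : ℤ) * α) c = 0) ∧
    ((∀ p : ℕ, p.Prime → p ∣ a → a.factorization p = c.factorization p) →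
      Nat.Coprime a (c / a) →
      Kl ((a : ℤ) * n) ((b : ℤ) * α) c =
        Kl 0 1 a * Kl n ((b : ℤ) * α * (((a : ZMod (c / a))⁻¹).val : ℤ)) (c / a)) := by
  haveI : NeZero c := ⟨hc.ne'⟩
  have hac : a ∣ c := dvd_trans (dvd_mul_right a b) hab
  have hαc : IsCoprime α (c : ℤ) := Int.isCoprime_iff_gcd_eq_one.2 hα
  constructor
  · -- part 1 : vanishing
    intro h1
    obtain ⟨p, hp, hpa, hlt⟩ := exists_bad_prime a c ha hc hac a' a'' ha' ha'' h1
    set β := c.factorization p with hβdef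
    have hva : 0 < a.factorization p := hp.factorization_pos_of_dvd ha.ne' hpa
    have hβ2 : 2 ≤ β := by omega
    set d := c / p ^ β with hd
    have hord : p ^ β * d = c := Nat.ordProj_mul_ordCompl_eq_self c p
    have hdpos : 0 < d := Nat.ordCompl_pos p hc.ne'
    haveI : NeZero (p ^ β) := ⟨pow_ne_zero _ hp.pos.ne'⟩
    haveI : NeZero d := ⟨hdpos.ne'⟩
    haveI : NeZero (p ^ β * d) := ⟨Nat.mul_ne_zero (pow_ne_zero _ hp.pos.ne') hdpos.ne'⟩
    have hcop2 : Nat.Coprime (p ^ β) d :=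
      Nat.Coprime.pow_left _ (Nat.coprime_ordCompl hp hc.ne')
    obtain ⟨g, h, hgh⟩ := bezout_of_coprime (p ^ β) d hcop2
    rw [← hord, Kl_eq_KlU, KlU_mul _ _ _ _ hcop2 g h hgh]
    have h0 : KlU (g * ((a:ℤ) * n)) (g * ((b:ℤ) * α)) (p ^ β) = 0 := by
      apply KlU_vanish p hp β hβ2
      · exact Dvd.dvd.mul_left
          (Dvd.dvd.mul_right (Int.natCast_dvd_natCast.2 hpa) n) g
      · have hgu : IsUnit ((g : ℤ) : ZMod (p ^ β)) := unit_of_bezout _ d g h hgh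
        have hbu : IsUnit ((b : ℕ) : ZMod (p ^ β)) :=
          (ZMod.isUnit_iff_coprime b (p ^ β)).2
            (Nat.Coprime.pow_right β (hcop.coprime_dvd_left hpa).symm)
        have hαu : IsUnit ((α : ℤ) : ZMod (p ^ β)) := by
          apply isUnit_intCast_of_coprime
          exact hαc.of_isCoprime_of_dvd_right (Int.natCast_dvd_natCast.2 ⟨d, hord.symm⟩)
        have hsplit : ((g * ((b:ℤ) * α) : ℤ) : ZMod (p ^ β))
            = ((g : ℤ) : ZMod (p ^ β)) * (((b : ℕ) : ZMod (p ^ β)) * ((α : ℤ) : ZMod (p ^ β))) := by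
          push_cast; ring
        rw [hsplit]
        exact hgu.mul (hbu.mul hαu)
    rw [h0, zero_mul]
  · -- part 2 : factorization
    intro _ hcop2
    set c' := c / a with hc'
    have hac' : a * c' = c := Nat.mul_div_cancel' hac
    have hc'pos : 0 < c' := Nat.div_pos (Nat.le_of_dvd hc hac) ha
    haveI : NeZero a := ⟨ha.ne'⟩
    haveI : NeZero c' := ⟨hc'pos.ne'⟩
    haveI : NeZero (a * c') := ⟨Nat.mul_ne_zero ha.ne' hc'pos.ne'⟩
    obtain ⟨g, h, hgh⟩ := bezout_of_coprime a c' hcop2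
    rw [← hac', Kl_eq_KlU, KlU_mul _ _ _ _ hcop2 g h hgh]
    have hha : ((h : ℤ) : ZMod c') * ((a : ℕ) : ZMod c') = 1 := by
      have h2 := congrArg (fun t : ℤ => ((t : ℤ) : ZMod c')) hgh
      push_cast at h2
      simpa [ZMod.natCast_self] using h2
    have hau : IsUnit ((a : ℕ) : ZMod c') := (ZMod.isUnit_iff_coprime a c').2 hcop2
    congr 1
    · -- first factor
      have e1 : KlU (g * ((a:ℤ) * n)) (g * ((b:ℤ) * α)) a = KlU 0 (g * ((b:ℤ) * α)) a := by
        apply KlU_congr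
        · have : ((g * ((a:ℤ) * n) : ℤ) : ZMod a)
              = ((g : ℤ) : ZMod a) * (((a : ℕ) : ZMod a) * ((n : ℤ) : ZMod a)) := by
            push_cast; ring
          rw [this, ZMod.natCast_self, zero_mul, mul_zero]
          simp
        · rfl
      have hgu : IsUnit ((g : ℤ) : ZMod a) := unit_of_bezout a c' g h hgh
      have hbu : IsUnit ((b : ℕ) : ZMod a) := (ZMod.isUnit_iff_coprime b a).2 hcop.symm
      have hαu : IsUnit ((α : ℤ) : ZMod a) := by
        apply isUnit_intCast_of_coprime
        exact hαc.of_isCoprime_of_dvd_right (Int.natCast_dvd_natCast.2 hac)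
      have e2 : KlU 0 (g * ((b:ℤ) * α)) a = KlU 0 1 a := by
        apply KlU_zero_unit
        have hsplit : ((g * ((b:ℤ) * α) : ℤ) : ZMod a)
            = ((g : ℤ) : ZMod a) * (((b : ℕ) : ZMod a) * ((α : ℤ) : ZMod a)) := by
          push_cast; ring
        rw [hsplit]
        exact hgu.mul (hbu.mul hαu)
      rw [e1, e2]
      exact (Kl_eq_KlU 0 1 a).symm
    · -- second factor
      have hhA : ((h : ℤ) : ZMod c') = ((a : ℕ) : ZMod c')⁻¹ := by
        calc ((h : ℤ) : ZMod c')
            = ((h : ℤ) : ZMod c') * (((a : ℕ) : ZMod c') * ((a : ℕ) : ZMod c')⁻¹) := by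
              rw [ZMod.mul_inv_of_unit _ hau, mul_one]
          _ = (((h : ℤ) : ZMod c') * ((a : ℕ) : ZMod c')) * ((a : ℕ) : ZMod c')⁻¹ := by ring
          _ = ((a : ℕ) : ZMod c')⁻¹ := by rw [hha, one_mul]
      have e3 : KlU (h * ((a:ℤ) * n)) (h * ((b:ℤ) * α)) c'
          = KlU n ((b : ℤ) * α * ((((a : ℕ) : ZMod c')⁻¹).val : ℤ)) c' := by
        apply KlU_congr
        · push_cast
          linear_combination ((n : ℤ) : ZMod c') * hha
        · push_cast
          rw [zmod_natCast_val, hhA]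
          ring
      rw [e3]
      exact (Kl_eq_KlU _ _ c').symm
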